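/- Let X be a finite pure k-dimensional simplicial complex (k ≥ 1) such that every (k−1)-simplex of X is contained in exactly m k-simplices of X. Then for every φ ∈ C^{k−1}(X): ‖d_{k−1}φ‖_X² = Σ_{τ ∈ X(k−2)} ‖d_0 φ_τ‖_{lk(X,τ)}² − m(k−1)·‖φ‖_X², where for τ ∈ X(k−2) the 0-cochain φ_τ on the link lk(X,τ) is defined by φ_τ(v) = φ(vτ) (vτ denotes the concatenation of the vertex v with the ordered simplex τ). -/

import Mathlib

open Finset

namespace BCC

/-! ### Simplicial cochain machinery.

A finite simplicial complex on a linearly ordered finite vertex type `V` is encoded as a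
`Finset (Finset V)` of faces (downward closure is assumed as a hypothesis where needed;
the empty face plays the role of the `(-1)`-dimensional simplex, so that the cochain
complex below is the *augmented* (reduced) one).

A skew-symmetric real-valued function on ordered `j`-simplices is determined by its values
on the increasingly-ordered simplices, so `C^j(X)` is encoded as the space of real functions
on the faces of cardinality `j+1`.  Thus `Cochain X m` is `C^{m-1}(X)`, and `d X m` is the
coboundary `d_{m-1} : C^{m-1}(X) → C^m(X)`; in particular `d X 0` is the augmentation
`d_{-1} : C^{-1}(X) = ℝ → C^0(X)`, `(d_{-1} a)(v) = a`.  `dStar X m` is the adjoint of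
`d X m` with respect to the standard inner products `(φ, ψ) = ∑_{σ ∈ X(j)} φ(σ)ψ(σ)`,
written out explicitly. -/

/-- `C^{m-1}(X)`: real cochains supported on the faces of cardinality `m`. -/
abbrev Cochain {V : Type*} [Fintype V] [LinearOrder V] (X : Finset (Finset V)) (m : ℕ) :
    Type _ :=
  {s : Finset V // s ∈ X ∧ s.card = m} → ℝ

section Ordered
variable {V : Type*} [Fintype V] [LinearOrder V]

/-- The sign `(-1)^i` of the vertex `v` in the increasingly ordered simplex `σ`,
where `i` is the position of `v` in `σ`. -/
noncomputable def sgn (σ : Finset V) (v : V) : ℝ :=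
  (-1 : ℝ) ^ (σ.filter fun w => w < v).card

/-- The simplicial coboundary `d_{m-1} : C^{m-1}(X) → C^m(X)`,
`(dφ)(σ) = ∑_{i} (-1)^i φ(σ_i)`. -/
noncomputable def d (X : Finset (Finset V)) (m : ℕ) :
    Cochain X m →ₗ[ℝ] Cochain X (m + 1) where
  toFun φ := fun σ => ∑ v ∈ σ.1, sgn σ.1 v *
    (if h : σ.1.erase v ∈ X ∧ (σ.1.erase v).card = m then φ ⟨σ.1.erase v, h⟩ else 0)
  map_add' φ ψ := by
    funext σ
    show (∑ v ∈ σ.1, (_ : ℝ)) = (∑ v ∈ σ.1, (_ : ℝ)) + (∑ v ∈ σ.1, (_ : ℝ))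
    rw [← Finset.sum_add_distrib]
    refine Finset.sum_congr rfl fun v hv => ?_
    split
    · show sgn σ.1 v * (φ _ + ψ _) = _; ring
    · ring
  map_smul' c φ := by
    funext σ
    show (∑ v ∈ σ.1, _) = c * (∑ v ∈ σ.1, _)
    rw [Finset.mul_sum]
    refine Finset.sum_congr rfl fun v hv => ?_
    split
    · show sgn σ.1 v * (c * φ _) = _; ring
    · ring

/-- The adjoint `d_{m-1}^* : C^m(X) → C^{m-1}(X)` of the coboundary `d X m` with respect to
the standard inner products, written out explicitly:
`(d^*ψ)(τ) = ∑_{v ∉ τ, τ ∪ {v} ∈ X} ± ψ(τ ∪ {v})`. -/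
noncomputable def dStar (X : Finset (Finset V)) (m : ℕ) :
    Cochain X (m + 1) →ₗ[ℝ] Cochain X m where
  toFun ψ := fun τ => ∑ v ∈ τ.1ᶜ, sgn (insert v τ.1) v *
    (if h : insert v τ.1 ∈ X ∧ (insert v τ.1).card = m + 1 then ψ ⟨insert v τ.1, h⟩ else 0)
  map_add' φ ψ := by
    funext τ
    show (∑ v ∈ τ.1ᶜ, (_ : ℝ)) = (∑ v ∈ τ.1ᶜ, (_ : ℝ)) + (∑ v ∈ τ.1ᶜ, (_ : ℝ))
    rw [← Finset.sum_add_distrib]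
    refine Finset.sum_congr rfl fun v hv => ?_
    split
    · show sgn _ v * (φ _ + ψ _) = _; ring
    · ring
  map_smul' c φ := by
    funext τ
    show (∑ v ∈ τ.1ᶜ, _) = c * (∑ v ∈ τ.1ᶜ, _)
    rw [Finset.mul_sum]
    refine Finset.sum_congr rfl fun v hv => ?_
    split
    · show sgn _ v * (c * φ _) = _; ring
    · ring

/-- The squared norm `‖φ‖² = ∑_{σ ∈ X(j)} φ(σ)²` of a cochain. -/
noncomputable def normSq {X : Finset (Finset V)} {m : ℕ} (φ : Cochain X m) : ℝ :=
  ∑ s, φ s ^ 2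

/-- The reduced `m`-th Laplacian `L_m = d_{m-1} d_{m-1}^* + d_m^* d_m`
acting on `C^m(X) = Cochain X (m+1)`. -/
noncomputable def Lap (X : Finset (Finset V)) (m : ℕ) :
    Cochain X (m + 1) →ₗ[ℝ] Cochain X (m + 1) :=
  (d X m) ∘ₗ (dStar X m) + (dStar X (m + 1)) ∘ₗ (d X (m + 1))

/-- The `m`-th spectral gap `μ_m(X)`: the minimal eigenvalue of the reduced `m`-th
Laplacian `L_m` acting on `C^m(X)`. -/
noncomputable def mu (X : Finset (Finset V)) (m : ℕ) : ℝ :=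
  sInf {μ : ℝ | Module.End.HasEigenvalue (Lap X m) μ}

/-- The dimension of the `j`-th reduced real cohomology `H̃^j(X;ℝ) = ker d_j / im d_{j-1}`
of the augmented cochain complex of `X`. -/
noncomputable def cohomDim (X : Finset (Finset V)) (j : ℕ) : ℕ :=
  Module.finrank ℝ
    (↥(LinearMap.ker (d X (j + 1))) ⧸
      (LinearMap.range (d X j)).comap (LinearMap.ker (d X (j + 1))).subtype)

/-! ### Links and `λ₂` of link graphs -/

/-- The vertex set of the link `lk(X,τ)` of the face `τ`. -/
def linkVerts (X : Finset (Finset V)) (τ : Finset V) : Finset V :=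
  univ.filter (fun v => v ∉ τ ∧ insert v τ ∈ X)

/-- The Dirichlet energy `‖d₀ f‖² = ∑_{{u,v} ∈ lk(X,τ)(1)} (f v - f u)²` of a function `f`
on the vertices of the link graph `lk(X,τ)` (each unordered edge counted once). -/
noncomputable def linkEnergy (X : Finset (Finset V)) (τ : Finset V) (f : V → ℝ) : ℝ :=
  (1 / 2) * ∑ u : V, ∑ v : V,
    if u ≠ v ∧ u ∉ τ ∧ v ∉ τ ∧ insert u (insert v τ) ∈ X then (f v - f u) ^ 2 else 0

/-- The second smallest eigenvalue `λ₂` of the Laplacian of the link graph `lk(X,τ)`,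
via its variational characterization: the infimum of the Rayleigh quotients
`‖d₀ f‖²/‖f‖²` over nonzero functions `f` on the link vertices with `∑_v f(v) = 0`. -/
noncomputable def linkLambda2 (X : Finset (Finset V)) (τ : Finset V) : ℝ :=
  sInf {r : ℝ | ∃ f : V → ℝ, (∀ v, v ∉ linkVerts X τ → f v = 0) ∧ (∑ v, f v) = 0 ∧
    f ≠ 0 ∧ r = linkEnergy X τ f / ∑ v, f v ^ 2}

/-- The localization `φ_τ` of a cochain `φ ∈ C^{m-1}(X)` to the link of a face `τ` with
`|τ| = m - 1` : `φ_τ(v) = φ(vτ)` (expressed through the chosen increasing orientations). -/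
noncomputable def restrictLink (X : Finset (Finset V)) {m : ℕ} (φ : Cochain X m)
    (τ : Finset V) : V → ℝ :=
  fun v => if h : v ∉ τ ∧ insert v τ ∈ X ∧ (insert v τ).card = m then
    sgn (insert v τ) v * φ ⟨insert v τ, h.2.1, h.2.2⟩ else 0

end Ordered

section Graphs
variable {V : Type*} [DecidableEq V]

/-- The link `lk(X,τ)` of a codimension-2 face, as a simple graph on its vertex set. -/
def linkGraph (X : Finset (Finset V)) (τ : Finset V) :
    SimpleGraph {v : V // v ∉ τ ∧ insert v τ ∈ X} where
  Adj u v := u ≠ v ∧ insert u.1 (insert v.1 τ) ∈ X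
  symm := ⟨by
    rintro u v ⟨h1, h2⟩
    exact ⟨h1.symm, by rwa [Finset.insert_comm] at h2⟩⟩
  loopless := ⟨fun u h => h.1 rfl⟩

/-- The bipartite Cayley graph `C_A` on `{1,2} × G` (encoded as `Fin 2 × G`), with an edge
between `(1,x₁)` and `(2,x₂)` whenever `x₁ x₂ ∈ A`. -/
def cayleyGraph (G : Type*) [Group G] [DecidableEq G] (A : Finset G) :
    SimpleGraph (Fin 2 × G) where
  Adj u v := (u.1 = 0 ∧ v.1 = 1 ∧ u.2 * v.2 ∈ A) ∨ (v.1 = 0 ∧ u.1 = 1 ∧ v.2 * u.2 ∈ A)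
  symm := by tauto
  loopless := ⟨by
    rintro ⟨i, x⟩ (⟨h0, h1, -⟩ | ⟨h0, h1, -⟩) <;> rw [h0] at h1 <;> exact absurd h1 (by decide)⟩

/-- The disjoint union of `ℓ` copies of a graph `H`. -/
def copies (ℓ : ℕ) {α : Type*} (H : SimpleGraph α) : SimpleGraph (Fin ℓ × α) where
  Adj u v := u.1 = v.1 ∧ H.Adj u.2 v.2
  symm := ⟨by rintro u v ⟨h1, h2⟩; exact ⟨h1.symm, h2.symm⟩⟩
  loopless := ⟨fun u h => H.loopless.irrefl u.2 h.2⟩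

end Graphs

/-! ### The complexes `Y_{G,k}` and `Y_{A,k}` -/

/-- The balanced complex `Y_{G,k}`, i.e. the simplicial join `V_1 * ⋯ * V_{k+1}` where
`V_i = {i} × G`: its faces are exactly the subsets of `Fin (k+1) × G` containing at most one
vertex of each colour `i : Fin (k+1)`. -/
def YG (G : Type*) [Fintype G] [DecidableEq G] (k : ℕ) :
    Finset (Finset (Fin (k + 1) × G)) :=
  (univ : Finset (Finset (Fin (k + 1) × G))).filter
    (fun s => ∀ x ∈ s, ∀ y ∈ s, Prod.fst x = Prod.fst y → x = y)

/-- The balanced `k`-dimensional Cayley complex `Y_{A,k}`: the full `(k-1)`-skeleton of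
`Y_{G,k}` together with all `k`-simplices `{(1,x_1),…,(k+1,x_{k+1})}` such that
`x_1 ⋯ x_{k+1} ∈ A` (the ordered product is taken along the colours `1,…,k+1`). -/
def YA (G : Type*) [Group G] [Fintype G] [DecidableEq G] (k : ℕ) (A : Finset G) :
    Finset (Finset (Fin (k + 1) × G)) :=
  (YG G k).filter (fun s => s.card ≤ k ∨
    ∃ x : Fin (k + 1) → G, s = univ.image (fun i => (i, x i)) ∧ (List.ofFn x).prod ∈ A)

/-! ### Unitary representations, `ν(A)` and `D(G)` -/

variable {G : Type*} [Group G]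

/-- A unitary matrix representation `ρ : G → U(d)` is irreducible if `d > 0` and the only
invariant subspaces of `ℂ^d` are `⊥` and `⊤`. -/
def IsIrred {d : ℕ} (ρ : G →* Matrix.unitaryGroup (Fin d) ℂ) : Prop :=
  0 < d ∧ ∀ W : Submodule ℂ (EuclideanSpace ℂ (Fin d)),
    (∀ g : G, ∀ v ∈ W, Matrix.toEuclideanLin (ρ g : Matrix (Fin d) (Fin d) ℂ) v ∈ W) →
      W = ⊥ ∨ W = ⊤

/-- A matrix representation is nontrivial if it is not identically the identity. -/
def IsNontrivialRep {d : ℕ} (ρ : G →* Matrix.unitaryGroup (Fin d) ℂ) : Prop :=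
  ∃ g : G, (ρ g : Matrix (Fin d) (Fin d) ℂ) ≠ 1

/-- The operator (spectral) norm of a complex `d × d` matrix. -/
noncomputable def opNorm {d : ℕ} (M : Matrix (Fin d) (Fin d) ℂ) : ℝ :=
  ‖Matrix.toEuclideanCLM (𝕜 := ℂ) M‖

/-- The Fourier transform `1̂_A(ρ) = ∑_{x ∈ A} ρ(x)` of the indicator of `A` at `ρ`. -/
noncomputable def fourier {d : ℕ} (ρ : G →* Matrix.unitaryGroup (Fin d) ℂ) (A : Finset G) :
    Matrix (Fin d) (Fin d) ℂ :=
  ∑ a ∈ A, (ρ a : Matrix (Fin d) (Fin d) ℂ)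

/-- `ν(A) = max_{ρ ∈ Ĝ₊} ‖1̂_A(ρ)‖`: the supremum of the operator norms `‖∑_{x ∈ A} ρ(x)‖`
over all nontrivial irreducible unitary matrix representations of `G` (this agrees with the
maximum over any complete set `Ĝ₊` of pairwise inequivalent nontrivial irreducible unitary
representations, since equivalent irreducible unitary representations are unitarily
equivalent and hence give the same norm). -/
noncomputable def nu (G : Type*) [Group G] (A : Finset G) : ℝ :=
  sSup {x : ℝ | ∃ (d : ℕ) (ρ : G →* Matrix.unitaryGroup (Fin d) ℂ),
    IsIrred ρ ∧ IsNontrivialRep ρ ∧ x = opNorm (fourier ρ A)}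

/-- Equivalence of two unitary matrix representations: an invertible intertwiner. -/
def RepEquiv {d₁ d₂ : ℕ} (ρ₁ : G →* Matrix.unitaryGroup (Fin d₁) ℂ)
    (ρ₂ : G →* Matrix.unitaryGroup (Fin d₂) ℂ) : Prop :=
  ∃ T : Matrix (Fin d₂) (Fin d₁) ℂ, Function.Bijective T.mulVecLin ∧
    ∀ g : G, T * (ρ₁ g : Matrix (Fin d₁) (Fin d₁) ℂ) = (ρ₂ g : Matrix (Fin d₂) (Fin d₂) ℂ) * T

/-- `(dims, ρs)` is a complete family of irreducible unitary representations of `G`: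
each member is irreducible, they are pairwise inequivalent, and every irreducible unitary
matrix representation of `G` is equivalent to some member.  Such a family realizes `Ĝ`,
and the sum of the degrees of the irreducible representations is `D(G) = ∑ i, dims i`. -/
def IsCompleteIrrepFamily (G : Type*) [Group G] {ι : Type} (dims : ι → ℕ)
    (ρs : ∀ i : ι, G →* Matrix.unitaryGroup (Fin (dims i)) ℂ) : Prop :=
  (∀ i, IsIrred (ρs i)) ∧
  (∀ i j, i ≠ j → ¬ RepEquiv (ρs i) (ρs j)) ∧
  (∀ (d : ℕ) (π : G →* Matrix.unitaryGroup (Fin d) ℂ), IsIrred π → ∃ i, RepEquiv π (ρs i))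

end BCC

open BCC


section GarlandAuxOpen
open Finset BCC
end GarlandAuxOpen


section GarlandAux
variable {V : Type*} [Fintype V] [LinearOrder V]

lemma bcc_sgn_mul_self (σ : Finset V) (v : V) : sgn σ v * sgn σ v = 1 := by
  unfold BCC.sgn
  rw [← pow_add]
  exact Even.neg_one_pow ⟨_, rfl⟩

/-- The value of a cochain extended by zero to all of `Finset V`. -/
noncomputable def bccF (X : Finset (Finset V)) (n : ℕ) (φ : Cochain X n) : Finset V → ℝ :=
  fun s => if h : s ∈ X ∧ s.card = n then φ ⟨s, h⟩ else 0

lemma bcc_normSq_eq (X : Finset (Finset V)) (n : ℕ) (φ : Cochain X n) :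
    normSq φ = ∑ s ∈ X.filter (fun s => s.card = n), bccF X n φ s ^ 2 := by
  rw [Finset.sum_subtype (p := fun s => s ∈ X ∧ s.card = n) _
    (fun x => by simp [Finset.mem_filter]) (fun s => bccF X n φ s ^ 2)]
  unfold BCC.normSq
  refine Finset.sum_congr rfl fun x _ => ?_
  unfold bccF
  rw [dif_pos x.2]

lemma bcc_restrict_eq (X : Finset (Finset V)) (n : ℕ) (φ : Cochain X n) (τ : Finset V)
    (v : V) (hv : v ∉ τ) (hc : (insert v τ).card = n) :
    restrictLink X φ τ v = sgn (insert v τ) v * bccF X n φ (insert v τ) := by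
  unfold BCC.restrictLink bccF
  by_cases h : insert v τ ∈ X
  · rw [dif_pos ⟨hv, h, hc⟩, dif_pos ⟨h, hc⟩]
  · rw [dif_neg (by tauto), dif_neg (by tauto), mul_zero]

lemma bcc_deg (X : Finset (Finset V)) (k m : ℕ)
    (hdeg : ∀ σ ∈ X, σ.card = k → (X.filter fun η => σ ⊆ η ∧ η.card = k + 1).card = m)
    (τ : Finset V) (hτ : τ ∈ X) (hc : τ.card = k) :
    (univ.filter fun w => w ∉ τ ∧ insert w τ ∈ X).card = m := by
  rw [← hdeg τ hτ hc]
  apply Finset.card_bij (fun w _ => insert w τ)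
  · intro w hw
    simp only [Finset.mem_filter, Finset.mem_univ, true_and] at hw
    simp only [Finset.mem_filter]
    exact ⟨hw.2, Finset.subset_insert _ _, by
      rw [Finset.card_insert_of_notMem hw.1, hc]⟩
  · intro w1 hw1 w2 hw2 he
    simp only [Finset.mem_filter, Finset.mem_univ, true_and] at hw1 hw2
    have : w1 ∈ insert w2 τ := he ▸ Finset.mem_insert_self w1 τ
    rcases Finset.mem_insert.1 this with h | h
    · exact h
    · exact absurd h hw1.1
  · intro η hη
    simp only [Finset.mem_filter] at hη
    obtain ⟨hηX, hsub, hcard⟩ := hη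
    have hone : (η \ τ).card = 1 := by
      rw [Finset.card_sdiff_of_subset hsub, hcard, hc]; omega
    obtain ⟨w, hw⟩ := Finset.card_eq_one.1 hone
    have hwmem : w ∈ η \ τ := hw ▸ Finset.mem_singleton_self w
    rw [Finset.mem_sdiff] at hwmem
    have hins : insert w τ = η := by
      apply Finset.eq_of_subset_of_card_le
      · exact Finset.insert_subset hwmem.1 hsub
      · rw [hcard, Finset.card_insert_of_notMem hwmem.2, hc]
    refine ⟨w, ?_, hins⟩
    simp only [Finset.mem_filter, Finset.mem_univ, true_and]
    exact ⟨hwmem.2, hins ▸ hηX⟩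

lemma bcc_sgn_pair (τ : Finset V) (u v : V) (hu : u ∉ τ) (hv : v ∉ τ) (huv : u ≠ v) :
    sgn (insert u (insert v τ)) u * sgn (insert u (insert v τ)) v
      = -(sgn (insert u τ) u * sgn (insert v τ) v) := by
  have key : ∀ a b : V, a ∉ τ → b ∉ τ → a ≠ b →
      ((insert a (insert b τ)).filter (fun w => w < a)).card
        = (τ.filter (fun w => w < a)).card + (if b < a then 1 else 0) := by
    intro a b ha hb hab
    rw [Finset.filter_insert, if_neg (lt_irrefl a), Finset.filter_insert]
    split_ifs with h
    · rw [Finset.card_insert_of_notMem (fun hmem => hb (Finset.mem_filter.1 hmem).1)]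
    · rw [add_zero]
  have key2 : ∀ a : V, ((insert a τ).filter (fun w => w < a)).card
      = (τ.filter (fun w => w < a)).card := by
    intro a
    rw [Finset.filter_insert, if_neg (lt_irrefl a)]
  have hvu : ((insert u (insert v τ)).filter (fun w => w < v)).card
      = (τ.filter (fun w => w < v)).card + (if u < v then 1 else 0) := by
    rw [Finset.insert_comm]
    exact key v u hv hu huv.symm
  unfold BCC.sgn
  rw [key u v hu hv huv, key2 u, key2 v, hvu]
  rcases huv.lt_or_gt with h | h
  · rw [if_neg (not_lt.2 h.le), if_pos h, add_zero, pow_succ]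
    ring
  · rw [if_pos h, if_neg (not_lt.2 h.le), add_zero, pow_succ]
    ring

lemma bcc_reindex1 (X : Finset (Finset V)) (hdc : ∀ s ∈ X, ∀ t ⊆ s, t ∈ X)
    (n : ℕ) (H : Finset V → V → ℝ) :
    ∑ σ ∈ X.filter (fun s => s.card = n + 1), ∑ v ∈ σ, H σ v
      = ∑ τ ∈ X.filter (fun s => s.card = n),
          ∑ v ∈ univ.filter (fun v => v ∉ τ ∧ insert v τ ∈ X), H (insert v τ) v := by
  rw [Finset.sum_sigma' (X.filter (fun s => s.card = n + 1)) (fun σ => σ)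
      (fun σ v => H σ v),
    Finset.sum_sigma' (X.filter (fun s => s.card = n))
      (fun τ => univ.filter (fun v => v ∉ τ ∧ insert v τ ∈ X))
      (fun τ v => H (insert v τ) v)]
  refine Finset.sum_nbij' (fun p => ⟨p.1.erase p.2, p.2⟩) (fun p => ⟨insert p.2 p.1, p.2⟩)
    ?_ ?_ ?_ ?_ ?_
  · rintro ⟨σ, v⟩ hp
    simp only [Finset.mem_sigma, Finset.mem_filter, Finset.mem_univ, true_and] at hp ⊢
    obtain ⟨⟨hσX, hσc⟩, hv⟩ := hp
    refine ⟨⟨hdc σ hσX _ (Finset.erase_subset _ _), ?_⟩,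
      Finset.notMem_erase _ _, by rw [Finset.insert_erase hv]; exact hσX⟩
    rw [Finset.card_erase_of_mem hv, hσc]
    omega
  · rintro ⟨τ, v⟩ hp
    simp only [Finset.mem_sigma, Finset.mem_filter, Finset.mem_univ, true_and] at hp ⊢
    obtain ⟨⟨hτX, hτc⟩, hvτ, hins⟩ := hp
    exact ⟨⟨hins, by rw [Finset.card_insert_of_notMem hvτ, hτc]⟩, Finset.mem_insert_self _ _⟩
  · rintro ⟨σ, v⟩ hp
    simp only [Finset.mem_sigma, Finset.mem_filter] at hp
    simp only [Finset.insert_erase hp.2]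
  · rintro ⟨τ, v⟩ hp
    simp only [Finset.mem_sigma, Finset.mem_filter, Finset.mem_univ, true_and] at hp
    simp only [Finset.erase_insert hp.2.1]
  · rintro ⟨σ, v⟩ hp
    simp only [Finset.mem_sigma, Finset.mem_filter] at hp
    simp only [Finset.insert_erase hp.2]

lemma bcc_reindex2 (X : Finset (Finset V)) (hdc : ∀ s ∈ X, ∀ t ⊆ s, t ∈ X)
    (n : ℕ) (H : Finset V → V → V → ℝ) :
    ∑ σ ∈ X.filter (fun s => s.card = n + 1 + 1), ∑ u ∈ σ, ∑ v ∈ σ.erase u, H σ u v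
      = ∑ τ ∈ X.filter (fun s => s.card = n), ∑ u ∈ (univ : Finset V),
          ∑ v ∈ univ.filter
            (fun v => u ≠ v ∧ u ∉ τ ∧ v ∉ τ ∧ insert u (insert v τ) ∈ X),
            H (insert u (insert v τ)) u v := by
  rw [Finset.sum_sigma' (X.filter (fun s => s.card = n + 1 + 1)) (fun σ => σ)
      (fun σ u => ∑ v ∈ σ.erase u, H σ u v),
    Finset.sum_sigma' ((X.filter (fun s => s.card = n + 1 + 1)).sigma (fun σ => σ))
      (fun p => p.1.erase p.2) (fun p v => H p.1 p.2 v),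
    Finset.sum_sigma' (X.filter (fun s => s.card = n)) (fun _ => (univ : Finset V))
      (fun τ u => ∑ v ∈ univ.filter
        (fun v => u ≠ v ∧ u ∉ τ ∧ v ∉ τ ∧ insert u (insert v τ) ∈ X),
        H (insert u (insert v τ)) u v),
    Finset.sum_sigma' ((X.filter (fun s => s.card = n)).sigma (fun _ => (univ : Finset V)))
      (fun p => univ.filter
        (fun v => p.2 ≠ v ∧ p.2 ∉ p.1 ∧ v ∉ p.1 ∧ insert p.2 (insert v p.1) ∈ X))
      (fun p v => H (insert p.2 (insert v p.1)) p.2 v)]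
  refine Finset.sum_nbij' (fun q => ⟨⟨(q.1.1.erase q.1.2).erase q.2, q.1.2⟩, q.2⟩)
    (fun q => ⟨⟨insert q.1.2 (insert q.2 q.1.1), q.1.2⟩, q.2⟩) ?_ ?_ ?_ ?_ ?_
  · rintro ⟨⟨σ, u⟩, v⟩ hq
    rw [Finset.mem_sigma, Finset.mem_sigma, Finset.mem_filter] at hq
    obtain ⟨⟨⟨hσX, hσc⟩, hu⟩, hv'⟩ := hq
    obtain ⟨hvne, hv⟩ := Finset.mem_erase.1 hv'
    refine Finset.mem_sigma.2 ⟨Finset.mem_sigma.2 ⟨Finset.mem_filter.2 ⟨?_, ?_⟩,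
      Finset.mem_univ _⟩, Finset.mem_filter.2 ⟨Finset.mem_univ _, ?_, ?_, ?_, ?_⟩⟩
    · exact hdc σ hσX _ ((Finset.erase_subset _ _).trans (Finset.erase_subset _ _))
    · rw [Finset.card_erase_of_mem hv', Finset.card_erase_of_mem hu, hσc]
      omega
    · exact Ne.symm hvne
    · exact fun hmem => Finset.notMem_erase u σ (Finset.erase_subset _ _ hmem)
    · exact Finset.notMem_erase _ _
    · rw [Finset.insert_erase hv', Finset.insert_erase hu]
      exact hσX
  · rintro ⟨⟨τ, u⟩, v⟩ hq
    rw [Finset.mem_sigma, Finset.mem_sigma, Finset.mem_filter, Finset.mem_filter] at hq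
    obtain ⟨⟨⟨hτX, hτc⟩, -⟩, -, huv, huτ, hvτ, hins⟩ := hq
    have hu' : u ∉ insert v τ := by
      simp only [Finset.mem_insert]
      push_neg
      exact ⟨huv, huτ⟩
    refine Finset.mem_sigma.2 ⟨Finset.mem_sigma.2 ⟨Finset.mem_filter.2 ⟨hins, ?_⟩,
      Finset.mem_insert_self _ _⟩, Finset.mem_erase.2
      ⟨Ne.symm huv, Finset.mem_insert_of_mem (Finset.mem_insert_self _ _)⟩⟩
    rw [Finset.card_insert_of_notMem hu', Finset.card_insert_of_notMem hvτ, hτc]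
  · rintro ⟨⟨σ, u⟩, v⟩ hq
    rw [Finset.mem_sigma, Finset.mem_sigma, Finset.mem_filter] at hq
    obtain ⟨⟨⟨hσX, hσc⟩, hu⟩, hv'⟩ := hq
    simp only [Finset.insert_erase hv', Finset.insert_erase hu]
  · rintro ⟨⟨τ, u⟩, v⟩ hq
    rw [Finset.mem_sigma, Finset.mem_sigma, Finset.mem_filter, Finset.mem_filter] at hq
    obtain ⟨⟨⟨hτX, hτc⟩, -⟩, -, huv, huτ, hvτ, hins⟩ := hq
    have hu' : u ∉ insert v τ := by
      simp only [Finset.mem_insert]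
      push_neg
      exact ⟨huv, huτ⟩
    simp only [Finset.erase_insert hu', Finset.erase_insert hvτ]
  · rintro ⟨⟨σ, u⟩, v⟩ hq
    rw [Finset.mem_sigma, Finset.mem_sigma, Finset.mem_filter] at hq
    obtain ⟨⟨⟨hσX, hσc⟩, hu⟩, hv'⟩ := hq
    simp only [Finset.insert_erase hv', Finset.insert_erase hu]

end GarlandAux


/-- **Claim 7 (Garland's local-to-global identity).**  Let `X` be a finite pure
`k`-dimensional simplicial complex (`k = j+1 ≥ 1`) in which every `(k-1)`-simplex is
contained in exactly `m` `k`-simplices.  Then for every `φ ∈ C^{k-1}(X)`: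
`‖d_{k-1}φ‖² = ∑_{τ ∈ X(k-2)} ‖d₀ φ_τ‖²_{lk(X,τ)} - m(k-1)·‖φ‖²`,
where `φ_τ(v) = φ(vτ)`. -/
theorem garland_identity {V : Type} [Fintype V] [LinearOrder V]
    (X : Finset (Finset V)) (hdc : ∀ s ∈ X, ∀ t ⊆ s, t ∈ X)
    (k j : ℕ) (hkj : k = j + 1)
    (hpure : ∀ s ∈ X, ∃ t ∈ X, s ⊆ t ∧ t.card = k + 1)
    (m : ℕ)
    (hdeg : ∀ σ ∈ X, σ.card = k → (X.filter fun η => σ ⊆ η ∧ η.card = k + 1).card = m)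
    (φ : Cochain X (j + 1)) :
    normSq (d X (j + 1) φ) =
      (∑ τ ∈ X.filter (fun τ => τ.card = j), linkEnergy X τ (restrictLink X φ τ))
        - m * ((k : ℝ) - 1) * normSq φ := by
  subst hkj
  have hnφ : normSq φ = ∑ s ∈ X.filter (fun s => s.card = j + 1), bccF X (j + 1) φ s ^ 2 :=
    bcc_normSq_eq X (j + 1) φ
  -- the diagonal part of the expansion of ‖dφ‖²
  have hD : (∑ σ ∈ X.filter (fun s => s.card = j + 1 + 1), ∑ v ∈ σ,
      bccF X (j + 1) φ (σ.erase v) ^ 2) = (m : ℝ) * normSq φ := by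
    rw [bcc_reindex1 X hdc (j + 1) (fun σ v => bccF X (j + 1) φ (σ.erase v) ^ 2), hnφ,
      Finset.mul_sum]
    refine Finset.sum_congr rfl fun τ hτ => ?_
    rw [Finset.mem_filter] at hτ
    have h1 : ∀ v ∈ univ.filter (fun v => v ∉ τ ∧ insert v τ ∈ X),
        bccF X (j + 1) φ ((insert v τ).erase v) ^ 2 = bccF X (j + 1) φ τ ^ 2 := by
      intro v hv
      rw [Finset.mem_filter] at hv
      rw [Finset.erase_insert hv.2.1]
    rw [Finset.sum_congr rfl h1, Finset.sum_const,
      bcc_deg X (j + 1) m hdeg τ hτ.1 hτ.2, nsmul_eq_mul]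
  -- the off-diagonal part of the expansion of ‖dφ‖²
  have hO : (∑ σ ∈ X.filter (fun s => s.card = j + 1 + 1), ∑ u ∈ σ, ∑ v ∈ σ.erase u,
      (sgn σ u * bccF X (j + 1) φ (σ.erase u)) * (sgn σ v * bccF X (j + 1) φ (σ.erase v)))
      = - ∑ τ ∈ X.filter (fun τ => τ.card = j), ∑ u : V, ∑ v : V,
          (if u ≠ v ∧ u ∉ τ ∧ v ∉ τ ∧ insert u (insert v τ) ∈ X then
            restrictLink X φ τ u * restrictLink X φ τ v else 0) := by
    rw [bcc_reindex2 X hdc j (fun σ u v =>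
      (sgn σ u * bccF X (j + 1) φ (σ.erase u)) * (sgn σ v * bccF X (j + 1) φ (σ.erase v))),
      ← Finset.sum_neg_distrib]
    refine Finset.sum_congr rfl fun τ hτ => ?_
    rw [Finset.mem_filter] at hτ
    rw [← Finset.sum_neg_distrib]
    refine Finset.sum_congr rfl fun u _ => ?_
    rw [← Finset.sum_neg_distrib, Finset.sum_filter]
    refine Finset.sum_congr rfl fun v _ => ?_
    by_cases hc : u ≠ v ∧ u ∉ τ ∧ v ∉ τ ∧ insert u (insert v τ) ∈ X
    · rw [if_pos hc, if_pos hc]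
      obtain ⟨huv, huτ, hvτ, hins⟩ := hc
      have hu' : u ∉ insert v τ := by
        simp only [Finset.mem_insert]; push_neg; exact ⟨huv, huτ⟩
      have hv' : v ∉ insert u τ := by
        simp only [Finset.mem_insert]; push_neg; exact ⟨Ne.symm huv, hvτ⟩
      have h1 : (insert u (insert v τ)).erase u = insert v τ := Finset.erase_insert hu'
      have h2 : (insert u (insert v τ)).erase v = insert u τ := by
        rw [Finset.insert_comm]; exact Finset.erase_insert hv'
      rw [h1, h2,
        bcc_restrict_eq X (j + 1) φ τ u huτ
          (by rw [Finset.card_insert_of_notMem huτ, hτ.2]),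
        bcc_restrict_eq X (j + 1) φ τ v hvτ
          (by rw [Finset.card_insert_of_notMem hvτ, hτ.2])]
      linear_combination (bccF X (j + 1) φ (insert u τ) * bccF X (j + 1) φ (insert v τ)) *
        bcc_sgn_pair τ u v huτ hvτ huv
    · rw [if_neg hc, if_neg hc, neg_zero]
  -- the expansion of ‖dφ‖²
  have hE1 : normSq (d X (j + 1) φ)
      = (∑ σ ∈ X.filter (fun s => s.card = j + 1 + 1), ∑ v ∈ σ,
          bccF X (j + 1) φ (σ.erase v) ^ 2)
        + (∑ σ ∈ X.filter (fun s => s.card = j + 1 + 1), ∑ u ∈ σ, ∑ v ∈ σ.erase u,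
          (sgn σ u * bccF X (j + 1) φ (σ.erase u)) *
            (sgn σ v * bccF X (j + 1) φ (σ.erase v))) := by
    rw [bcc_normSq_eq X (j + 1 + 1) (d X (j + 1) φ), ← Finset.sum_add_distrib]
    refine Finset.sum_congr rfl fun σ hσ => ?_
    rw [Finset.mem_filter] at hσ
    have hval : bccF X (j + 1 + 1) (d X (j + 1) φ) σ
        = ∑ v ∈ σ, sgn σ v * bccF X (j + 1) φ (σ.erase v) := by
      unfold bccF
      rw [dif_pos hσ]
      rfl
    rw [hval, pow_two, Finset.sum_mul_sum, ← Finset.sum_add_distrib]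
    refine Finset.sum_congr rfl fun u hu => ?_
    rw [← Finset.add_sum_erase σ (fun v => (sgn σ u * bccF X (j + 1) φ (σ.erase u)) *
      (sgn σ v * bccF X (j + 1) φ (σ.erase v))) hu]
    congr 1
    linear_combination (bccF X (j + 1) φ (σ.erase u) * bccF X (j + 1) φ (σ.erase u)) *
      bcc_sgn_mul_self σ u
  -- sum of localized squares
  have hsum2 : (∑ τ ∈ X.filter (fun τ => τ.card = j), ∑ v : V, restrictLink X φ τ v ^ 2)
      = ((j : ℝ) + 1) * normSq φ := by
    have h1 : ∀ τ ∈ X.filter (fun τ => τ.card = j), (∑ v : V, restrictLink X φ τ v ^ 2)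
        = ∑ v ∈ univ.filter (fun v => v ∉ τ ∧ insert v τ ∈ X),
            bccF X (j + 1) φ (insert v τ) ^ 2 := by
      intro τ hτ
      rw [Finset.mem_filter] at hτ
      rw [Finset.sum_filter]
      refine Finset.sum_congr rfl fun v _ => ?_
      by_cases hv : v ∉ τ ∧ insert v τ ∈ X
      · rw [if_pos hv, bcc_restrict_eq X (j + 1) φ τ v hv.1
          (by rw [Finset.card_insert_of_notMem hv.1, hτ.2]), mul_pow,
          pow_two (sgn (insert v τ) v), bcc_sgn_mul_self, one_mul]
      · rw [if_neg hv]
        have h0 : restrictLink X φ τ v = 0 := by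
          unfold BCC.restrictLink
          rw [dif_neg (by tauto)]
        rw [h0]
        ring
    rw [Finset.sum_congr rfl h1,
      ← bcc_reindex1 X hdc j (fun σ _ => bccF X (j + 1) φ σ ^ 2), hnφ, Finset.mul_sum]
    refine Finset.sum_congr rfl fun σ hσ => ?_
    rw [Finset.mem_filter] at hσ
    rw [Finset.sum_const, hσ.2, nsmul_eq_mul]
    push_cast
    ring
  -- per-simplex link energy identity
  have hle : ∀ τ ∈ X.filter (fun τ => τ.card = j),
      linkEnergy X τ (restrictLink X φ τ)
        = (m : ℝ) * (∑ v : V, restrictLink X φ τ v ^ 2)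
          - ∑ u : V, ∑ v : V,
              (if u ≠ v ∧ u ∉ τ ∧ v ∉ τ ∧ insert u (insert v τ) ∈ X then
                restrictLink X φ τ u * restrictLink X φ τ v else 0) := by
    intro τ hτ
    rw [Finset.mem_filter] at hτ
    unfold BCC.linkEnergy
    have hA : ∀ u v : V,
        (if u ≠ v ∧ u ∉ τ ∧ v ∉ τ ∧ insert u (insert v τ) ∈ X then
          (restrictLink X φ τ v - restrictLink X φ τ u) ^ 2 else 0)
        = (if u ≠ v ∧ u ∉ τ ∧ v ∉ τ ∧ insert u (insert v τ) ∈ X then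
            restrictLink X φ τ v ^ 2 else 0)
          + (if u ≠ v ∧ u ∉ τ ∧ v ∉ τ ∧ insert u (insert v τ) ∈ X then
            restrictLink X φ τ u ^ 2 else 0)
          - 2 * (if u ≠ v ∧ u ∉ τ ∧ v ∉ τ ∧ insert u (insert v τ) ∈ X then
            restrictLink X φ τ u * restrictLink X φ τ v else 0) := by
      intro u v
      split_ifs <;> ring
    simp only [hA, Finset.sum_add_distrib, Finset.sum_sub_distrib, ← Finset.mul_sum]
    have hBA : (∑ u : V, ∑ v : V,
        (if u ≠ v ∧ u ∉ τ ∧ v ∉ τ ∧ insert u (insert v τ) ∈ X then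
          restrictLink X φ τ u ^ 2 else 0))
        = ∑ u : V, ∑ v : V,
            (if u ≠ v ∧ u ∉ τ ∧ v ∉ τ ∧ insert u (insert v τ) ∈ X then
              restrictLink X φ τ v ^ 2 else 0) := by
      rw [Finset.sum_comm]
      refine Finset.sum_congr rfl fun u _ => Finset.sum_congr rfl fun v _ => ?_
      refine if_congr ?_ rfl rfl
      constructor
      · rintro ⟨h1, h2, h3, h4⟩
        exact ⟨Ne.symm h1, h3, h2, by rwa [Finset.insert_comm]⟩
      · rintro ⟨h1, h2, h3, h4⟩
        exact ⟨Ne.symm h1, h3, h2, by rwa [Finset.insert_comm]⟩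
    have hAm : (∑ u : V, ∑ v : V,
        (if u ≠ v ∧ u ∉ τ ∧ v ∉ τ ∧ insert u (insert v τ) ∈ X then
          restrictLink X φ τ v ^ 2 else 0))
        = (m : ℝ) * ∑ v : V, restrictLink X φ τ v ^ 2 := by
      rw [Finset.sum_comm, Finset.mul_sum]
      refine Finset.sum_congr rfl fun v _ => ?_
      by_cases hv : v ∉ τ ∧ insert v τ ∈ X
      · have hfil : univ.filter
            (fun u => u ≠ v ∧ u ∉ τ ∧ v ∉ τ ∧ insert u (insert v τ) ∈ X)
            = univ.filter (fun w => w ∉ insert v τ ∧ insert w (insert v τ) ∈ X) := by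
          refine Finset.filter_congr fun u _ => ?_
          simp only [Finset.mem_insert]
          constructor
          · rintro ⟨h1, h2, h3, h4⟩
            refine ⟨?_, h4⟩
            push_neg
            exact ⟨h1, h2⟩
          · rintro ⟨h1, h2⟩
            push_neg at h1
            exact ⟨h1.1, h1.2, hv.1, h2⟩
        rw [← Finset.sum_filter, hfil, Finset.sum_const,
          bcc_deg X (j + 1) m hdeg (insert v τ) hv.2
            (by rw [Finset.card_insert_of_notMem hv.1, hτ.2]), nsmul_eq_mul]
      · have h0 : restrictLink X φ τ v = 0 := by
          unfold BCC.restrictLink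
          rw [dif_neg (by tauto)]
        rw [h0]
        simp
    rw [hBA, hAm]
    ring
  have hlink : (∑ τ ∈ X.filter (fun τ => τ.card = j), linkEnergy X τ (restrictLink X φ τ))
      = (m : ℝ) * (((j : ℝ) + 1) * normSq φ)
        - ∑ τ ∈ X.filter (fun τ => τ.card = j), ∑ u : V, ∑ v : V,
            (if u ≠ v ∧ u ∉ τ ∧ v ∉ τ ∧ insert u (insert v τ) ∈ X then
              restrictLink X φ τ u * restrictLink X φ τ v else 0) := by
    rw [Finset.sum_congr rfl hle, Finset.sum_sub_distrib, ← Finset.mul_sum, hsum2]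
  rw [hE1, hD, hO, hlink]
  push_cast
  ring
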